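/- Let σ, ξ, ζ, g, n, ρ be real numbers with g > 0, 0 < ξ < 1, σ > ξ, and suppose Θ_S := ((σ−ξ)·n + ξ·ρ) / (ξ·(1−ξ)·g) − (σ−ξ)·(1−ζ) / (ξ·(1−ξ)) > 0. Then the equation [(1−ξ)·(1−l) + (σ/ξ − 1)·(1−ζ)·l] · g / l = (σ/ξ − 1)·n + ρ has a unique solution l in (0,1), namely l = 1/(1 + Θ_S). -/

import Mathlib

/-- Proposition 4: the planner's R&D labor share is the unique `l ∈ (0,1)` solving
`[(1−ξ)(1−l) + (σ/ξ−1)(1−ζ)l]·g/l = (σ/ξ−1)·n + ρ`, namely `l = 1/(1+Θ_S)`. -/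
theorem stmt6 (σ ξ ζ g n ρ : ℝ) (hg : g > 0) (hξ0 : 0 < ξ) (hξ1 : ξ < 1)
    (hσξ : σ > ξ)
    (hΘ : ((σ - ξ) * n + ξ * ρ) / (ξ * (1 - ξ) * g) -
          (σ - ξ) * (1 - ζ) / (ξ * (1 - ξ)) > 0) :
    (∃! l : ℝ, l ∈ Set.Ioo (0 : ℝ) 1 ∧
        ((1 - ξ) * (1 - l) + (σ / ξ - 1) * (1 - ζ) * l) * g / l =
          (σ / ξ - 1) * n + ρ) ∧
    (1 / (1 + (((σ - ξ) * n + ξ * ρ) / (ξ * (1 - ξ) * g) -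
          (σ - ξ) * (1 - ζ) / (ξ * (1 - ξ)))) ∈ Set.Ioo (0 : ℝ) 1 ∧
      ((1 - ξ) * (1 - 1 / (1 + (((σ - ξ) * n + ξ * ρ) / (ξ * (1 - ξ) * g) -
              (σ - ξ) * (1 - ζ) / (ξ * (1 - ξ))))) +
          (σ / ξ - 1) * (1 - ζ) *
            (1 / (1 + (((σ - ξ) * n + ξ * ρ) / (ξ * (1 - ξ) * g) -
              (σ - ξ) * (1 - ζ) / (ξ * (1 - ξ)))))) * g /
          (1 / (1 + (((σ - ξ) * n + ξ * ρ) / (ξ * (1 - ξ) * g) -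
            (σ - ξ) * (1 - ζ) / (ξ * (1 - ξ))))) =
        (σ / ξ - 1) * n + ρ) := by
  have hξ : (ξ:ℝ) ≠ 0 := ne_of_gt hξ0
  have h1ξ : (1 - ξ) ≠ 0 := by intro h; linarith [h]
  have hg' : g ≠ 0 := ne_of_gt hg
  set Θ : ℝ := ((σ - ξ) * n + ξ * ρ) / (ξ * (1 - ξ) * g) -
          (σ - ξ) * (1 - ζ) / (ξ * (1 - ξ)) with hΘdef
  have h1Θ : (0:ℝ) < 1 + Θ := by linarith
  have h1Θ' : (1:ℝ) + Θ ≠ 0 := ne_of_gt h1Θ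
  have key : ∀ l : ℝ, l ≠ 0 →
      (((1 - ξ) * (1 - l) + (σ / ξ - 1) * (1 - ζ) * l) * g / l =
          (σ / ξ - 1) * n + ρ ↔ l * (1 + Θ) = 1) := by
    intro l hl
    rw [hΘdef]
    rw [div_eq_iff hl]
    constructor
    · intro h
      field_simp
      field_simp at h
      linear_combination -h
    · intro h
      field_simp at h
      field_simp
      refine mul_left_cancel₀ (mul_ne_zero hξ h1ξ) ?_
      linear_combination (-(ξ * (1 - ξ))) * h
  set L : ℝ := 1 / (1 + Θ) with hLdef
  have hLmul : L * (1 + Θ) = 1 := by rw [hLdef]; field_simp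
  have hL0 : 0 < L := by positivity
  have hL1 : L < 1 := by
    rw [hLdef]
    rw [div_lt_one h1Θ]; linarith
  have hLIoo : L ∈ Set.Ioo (0:ℝ) 1 := ⟨hL0, hL1⟩
  have hLeq : ((1 - ξ) * (1 - L) + (σ / ξ - 1) * (1 - ζ) * L) * g / L =
      (σ / ξ - 1) * n + ρ := (key L (ne_of_gt hL0)).mpr hLmul
  refine ⟨⟨L, ⟨hLIoo, hLeq⟩, ?_⟩, hLIoo, hLeq⟩
  rintro y ⟨⟨hy0, hy1⟩, hyeq⟩
  have := (key y (ne_of_gt hy0)).mp hyeq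
  rw [hLdef]
  field_simp
  linarith [this]
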